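/- Let q ≥ 2, b ≥ 2, k ≥ 1, ρ ≥ 1, ℓ be integers and 0 ≤ h₀,…,h_{k−1} < q^ρ. Define S₁₀(h₀,…,h_{k−1}) := ∑_{0 ≤ n < q^ρ} e( (ℓ/b) · ∑_{w=(w₀,…,w_{k−1}) ∈ {0,1}^k} (−1)^{s₂(w)} s_q^ρ(n + ∑_{i=0}^{k−1} w_i h_i) ). Then |S₁₀(h₀,…,h_{k−1})|² = ∑_{0 ≤ h_k < q^ρ} S₁₀(h₀,…,h_{k−1},h_k), where S₁₀ with k+1 shifts is defined analogously with w ∈ {0,1}^{k+1}. -/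

import Mathlib

open scoped Real

/-- Base-q digit sum. -/
def sqd (q n : ℕ) : ℕ := (Nat.digits q n).sum

/-- Truncated base-q digit sum: digit sum of `n mod q^α`. -/
def sqT (q α n : ℕ) : ℕ := sqd q (n % q ^ α)

/-- `e(t) = exp(2πit)`. -/
noncomputable def e (t : ℝ) : ℂ := Complex.exp (2 * Real.pi * Complex.I * t)

/-- The Gowers-type sum `S₁₀` with `k` shifts `h₀,…,h_{k−1}`. -/
noncomputable def S10 (q b ρ : ℕ) (ℓ : ℤ) (k : ℕ) (h : ℕ → ℕ) : ℂ :=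
  ∑ n ∈ Finset.range (q ^ ρ),
    e ((ℓ : ℝ) / b * ∑ w ∈ Finset.range (2 ^ k),
        (-1 : ℝ) ^ (Nat.digits 2 w).sum *
          (sqT q ρ (n + ∑ i ∈ Finset.range k, if w.testBit i then h i else 0) : ℝ))

lemma e_add (x y : ℝ) : e (x + y) = e x * e y := by
  simp only [e, Complex.ofReal_add, mul_add, Complex.exp_add]

lemma conj_e (x : ℝ) : (starRingEnd ℂ) (e x) = e (-x) := by
  rw [e, e, ← Complex.exp_conj]
  congr 1
  simp only [map_mul, Complex.conj_I, Complex.conj_ofReal, map_ofNat, Complex.ofReal_neg]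
  ring

lemma digitsum_aux (w : ℕ) :
    (Nat.digits 2 w).sum = w % 2 + (Nat.digits 2 (w / 2)).sum := by
  rcases Nat.eq_zero_or_pos w with h | h
  · simp [h]
  · rw [Nat.digits_def' (by norm_num : 1 < 2) h, List.sum_cons]

lemma digitsum_two_pow_add : ∀ k w, w < 2 ^ k →
    (Nat.digits 2 (2 ^ k + w)).sum = (Nat.digits 2 w).sum + 1 := by
  intro k
  induction k with
  | zero =>
    intro w hw
    have : w = 0 := by omega
    subst this
    simp
  | succ k ih =>
    intro w hw
    have he : 2 ^ (k + 1) = 2 * 2 ^ k := by rw [pow_succ]; ring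
    have h1 : (2 ^ (k + 1) + w) % 2 = w % 2 := by omega
    have h2 : (2 ^ (k + 1) + w) / 2 = 2 ^ k + w / 2 := by omega
    have h3 : w / 2 < 2 ^ k := by omega
    rw [digitsum_aux (2 ^ (k + 1) + w), h1, h2, ih _ h3, digitsum_aux w]
    omega

lemma tb_low (k w i : ℕ) (hi : i < k) : (2 ^ k + w).testBit i = w.testBit i := by
  have h1 : 2 ^ k + w = 2 ^ i * 2 ^ (k - i) + w := by
    rw [← pow_add]; congr 2; omega
  have h2 : 2 ^ (k - i) = 2 * 2 ^ (k - i - 1) := by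
    rw [← pow_succ']; congr 1; omega
  have key : (2 ^ k + w) / 2 ^ i % 2 = w / 2 ^ i % 2 := by
    rw [h1, Nat.mul_add_div (Nat.two_pow_pos i), h2]
    omega
  rw [Nat.testBit_eq_decide_div_mod_eq, Nat.testBit_eq_decide_div_mod_eq, key]

lemma tb_high (k w : ℕ) (hw : w < 2 ^ k) : (2 ^ k + w).testBit k = true := by
  rw [Nat.testBit_eq_decide_div_mod_eq]
  have h1 : 2 ^ k + w = 2 ^ k * 1 + w := by ring
  rw [h1, Nat.mul_add_div (Nat.two_pow_pos k)]
  have : w / 2 ^ k = 0 := Nat.div_eq_of_lt hw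
  simp [this]

lemma sum_range_shift {M : Type*} [AddCommMonoid M] (g : ℕ → M) (N n : ℕ) (hN : 0 < N) :
    ∑ i ∈ Finset.range N, g ((n + i) % N) = ∑ i ∈ Finset.range N, g i := by
  have hr : n % N < N := Nat.mod_lt _ hN
  have hdm := Nat.div_add_mod n N
  apply Finset.sum_nbij' (fun i => (n + i) % N) (fun j => (j + (N - n % N)) % N)
  · intro a ha
    exact Finset.mem_range.mpr (Nat.mod_lt _ hN)
  · intro a ha
    exact Finset.mem_range.mpr (Nat.mod_lt _ hN)
  · intro a ha
    -- ((n + a) % N + (N - n % N)) % N = a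
    have ha' : a < N := Finset.mem_range.mp ha
    rw [← Nat.mod_add_mod, Nat.mod_add_mod, Nat.mod_add_mod]
    have : n + a + (N - n % N) = a + N + N * (n / N) := by omega
    rw [this, Nat.add_mul_mod_self_left, Nat.add_mod_right, Nat.mod_eq_of_lt ha']
  · intro a ha
    -- (n + (a + (N - n % N)) % N) % N = a
    have ha' : a < N := Finset.mem_range.mp ha
    rw [Nat.add_mod_mod]
    have : n + (a + (N - n % N)) = a + N + N * (n / N) := by omega
    rw [this, Nat.add_mul_mod_self_left, Nat.add_mod_right, Nat.mod_eq_of_lt ha']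
  · intro a ha
    rfl

theorem stmt14 (q b k ρ : ℕ) (ℓ : ℤ) (hq : 2 ≤ q) (hb : 2 ≤ b) (hk : 1 ≤ k)
    (hρ : 1 ≤ ρ) (h : ℕ → ℕ) (hh : ∀ i < k, h i < q ^ ρ) :
    ((‖S10 q b ρ ℓ k h‖ ^ 2 : ℝ) : ℂ) =
      ∑ hk' ∈ Finset.range (q ^ ρ), S10 q b ρ ℓ (k + 1) (Function.update h k hk') := by
  set N := q ^ ρ with hN
  have hNpos : 0 < N := Nat.pow_pos (by omega)
  set c : ℝ := (ℓ : ℝ) / b with hc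
  set G : ℕ → ℝ := fun m => ∑ w ∈ Finset.range (2 ^ k),
      (-1 : ℝ) ^ (Nat.digits 2 w).sum *
        (sqT q ρ (m + ∑ i ∈ Finset.range k, if w.testBit i then h i else 0) : ℝ) with hG
  -- periodicity of G
  have hGper : ∀ m : ℕ, G (m % N) = G m := by
    intro m
    apply Finset.sum_congr rfl
    intro w _
    congr 2
    show sqT q ρ (m % N + _) = sqT q ρ (m + _)
    unfold sqT sqd
    rw [← hN, Nat.mod_add_mod]
  -- the key expansion of the (k+1)-fold sum
  have hexp : ∀ hk' n : ℕ,
      (∑ w ∈ Finset.range (2 ^ (k + 1)),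
        (-1 : ℝ) ^ (Nat.digits 2 w).sum *
          (sqT q ρ (n + ∑ i ∈ Finset.range (k + 1),
            if w.testBit i then Function.update h k hk' i else 0) : ℝ))
      = G n - G (n + hk') := by
    intro hk' n
    have hsplit : 2 ^ (k + 1) = 2 ^ k + 2 ^ k := by rw [pow_succ]; ring
    rw [hsplit, Finset.sum_range_add]
    have h1 : ∀ w ∈ Finset.range (2 ^ k),
        (-1 : ℝ) ^ (Nat.digits 2 w).sum *
          (sqT q ρ (n + ∑ i ∈ Finset.range (k + 1),
            if w.testBit i then Function.update h k hk' i else 0) : ℝ)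
        = (-1 : ℝ) ^ (Nat.digits 2 w).sum *
          (sqT q ρ (n + ∑ i ∈ Finset.range k, if w.testBit i then h i else 0) : ℝ) := by
      intro w hw
      have hw' : w < 2 ^ k := Finset.mem_range.mp hw
      congr 2
      rw [Finset.sum_range_succ, Nat.testBit_eq_false_of_lt hw',
        if_neg (by simp), add_zero]
      congr 2
      apply Finset.sum_congr rfl
      intro i hi
      have hik : i ≠ k := Nat.ne_of_lt (Finset.mem_range.mp hi)
      rw [Function.update_of_ne hik]
    have h2 : ∀ w ∈ Finset.range (2 ^ k),
        (-1 : ℝ) ^ (Nat.digits 2 (2 ^ k + w)).sum *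
          (sqT q ρ (n + ∑ i ∈ Finset.range (k + 1),
            if (2 ^ k + w).testBit i then Function.update h k hk' i else 0) : ℝ)
        = -((-1 : ℝ) ^ (Nat.digits 2 w).sum *
          (sqT q ρ (n + hk' + ∑ i ∈ Finset.range k, if w.testBit i then h i else 0) : ℝ)) := by
      intro w hw
      have hw' : w < 2 ^ k := Finset.mem_range.mp hw
      rw [digitsum_two_pow_add k w hw', pow_succ]
      have hT : (∑ i ∈ Finset.range (k + 1),
          if (2 ^ k + w).testBit i then Function.update h k hk' i else 0)
          = (∑ i ∈ Finset.range k, if w.testBit i then h i else 0) + hk' := by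
        rw [Finset.sum_range_succ, tb_high k w hw', if_pos rfl, Function.update_self]
        congr 1
        apply Finset.sum_congr rfl
        intro i hi
        have hik : i < k := Finset.mem_range.mp hi
        rw [tb_low k w i hik, Function.update_of_ne (Nat.ne_of_lt hik)]
      rw [hT]
      have : n + ((∑ i ∈ Finset.range k, if w.testBit i then h i else 0) + hk')
          = n + hk' + ∑ i ∈ Finset.range k, if w.testBit i then h i else 0 := by omega
      rw [this]
      ring
    rw [Finset.sum_congr rfl h1, Finset.sum_congr rfl h2, Finset.sum_neg_distrib]
    simp only [hG]
    ring
  -- rewrite RHS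
  have hRHS : ∀ hk' : ℕ, S10 q b ρ ℓ (k + 1) (Function.update h k hk')
      = ∑ n ∈ Finset.range N, e (c * G n) * e (-(c * G (n + hk'))) := by
    intro hk'
    unfold S10
    rw [← hN]
    apply Finset.sum_congr rfl
    intro n _
    rw [hexp hk' n]
    rw [show c * (G n - G (n + hk')) = c * G n + -(c * G (n + hk')) by ring, e_add]
  have hLHS : S10 q b ρ ℓ k h = ∑ n ∈ Finset.range N, e (c * G n) := rfl
  calc ((‖S10 q b ρ ℓ k h‖ ^ 2 : ℝ) : ℂ)
      = S10 q b ρ ℓ k h * (starRingEnd ℂ) (S10 q b ρ ℓ k h) := by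
        rw [Complex.mul_conj]
        norm_cast
        rw [Complex.normSq_eq_norm_sq]
    _ = (∑ n ∈ Finset.range N, e (c * G n)) * ∑ m ∈ Finset.range N, e (-(c * G m)) := by
        rw [hLHS, map_sum]
        congr 1
        exact Finset.sum_congr rfl fun m _ => conj_e _
    _ = ∑ n ∈ Finset.range N, e (c * G n) * ∑ m ∈ Finset.range N, e (-(c * G m)) :=
        Finset.sum_mul _ _ _
    _ = ∑ n ∈ Finset.range N, ∑ hk' ∈ Finset.range N, e (c * G n) * e (-(c * G (n + hk'))) := by
        apply Finset.sum_congr rfl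
        intro n _
        rw [Finset.mul_sum,
          ← sum_range_shift (fun m => e (c * G n) * e (-(c * G m))) N n hNpos]
        exact Finset.sum_congr rfl fun hk' _ => by rw [hGper]
    _ = ∑ hk' ∈ Finset.range N, S10 q b ρ ℓ (k + 1) (Function.update h k hk') := by
        rw [Finset.sum_comm]
        exact Finset.sum_congr rfl fun hk' _ => (hRHS hk').symm
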